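/- Let G be a graph, p a reflective transition kernel on G (invariant under a group Γ_p of automorphisms making G reflective), Z = (Z_n)_{n≥0} a discrete-time random walk with Z_0 = y and kernel p, and ℓ = (ℓ_n)_{n≥1} ∈ {1,2}^ℕ a fixed sequence. Then there exist processes (W^y_n) and (W^z_n) with W^y_0 = y, W^z_0 = z, such that: (1) d(W^y_n, W^z_n) = d(Z_n, z) for all n; and (2) conditionally on (W^y_i, W^z_i)_{i≤n}, if ℓ_{n+1} = 1 then W^z_{n+1} = W^z_n and W^y_{n+1} is distributed as p(W^y_n, ·), while if ℓ_{n+1} = 2 then W^y_{n+1} = W^y_n and W^z_{n+1} is distributed as p(W^z_n, ·). -/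

import Mathlib

open MeasureTheory
open scoped ENNReal

section EntAux

variable {V Ω : Type}

/-- The entangled state process: `(Wy, Wz, σ)` where `σ` carries `Z n` to the active
walk and `z` to the passive walk. -/
noncomputable def entS (Z : ℕ → Ω → V) (ℓ : ℕ → Bool) (sw : V → V → Equiv.Perm V)
    (y z : V) : ℕ → Ω → (V × V) × Equiv.Perm V
  | 0, _ => ((y, z), if ℓ 1 = true then 1 else sw y z)
  | n+1, ω =>
    let s := entS Z ℓ sw y z n ω
    if ℓ (n+1) = true then
      ((s.2 (Z (n+1) ω), s.1.2),
        if ℓ (n+2) = true then s.2 else sw (s.2 (Z (n+1) ω)) s.1.2 * s.2)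
    else
      ((s.1.1, s.2 (Z (n+1) ω)),
        if ℓ (n+2) = true then sw s.1.1 (s.2 (Z (n+1) ω)) * s.2 else s.2)

/-- Deterministic reconstruction of the automorphism sequence from a candidate
trajectory `(fy, fz)`. -/
noncomputable def entT (ℓ : ℕ → Bool) (sw : V → V → Equiv.Perm V)
    (y z : V) (fy fz : ℕ → V) : ℕ → Equiv.Perm V
  | 0 => if ℓ 1 = true then 1 else sw y z
  | n+1 => if ℓ (n+2) = ℓ (n+1) then entT ℓ sw y z fy fz n
           else sw (fy (n+1)) (fz (n+1)) * entT ℓ sw y z fy fz n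

lemma entS_succ_snd (Z : ℕ → Ω → V) (ℓ : ℕ → Bool) (sw : V → V → Equiv.Perm V)
    (y z : V) (n : ℕ) (ω : Ω) :
    (entS Z ℓ sw y z (n+1) ω).2 =
      if ℓ (n+2) = ℓ (n+1) then (entS Z ℓ sw y z n ω).2
      else sw (entS Z ℓ sw y z (n+1) ω).1.1 (entS Z ℓ sw y z (n+1) ω).1.2
             * (entS Z ℓ sw y z n ω).2 := by
  cases h1 : ℓ (n+1) <;> cases h2 : ℓ (n+2) <;> simp [entS, h1, h2]

lemma entS_congr (Z : ℕ → Ω → V) (ℓ : ℕ → Bool) (sw : V → V → Equiv.Perm V)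
    (y z : V) : ∀ (n : ℕ) (ω ω' : Ω), (∀ i ≤ n, Z i ω = Z i ω') →
    entS Z ℓ sw y z n ω = entS Z ℓ sw y z n ω'
  | 0, ω, ω', _ => by simp [entS]
  | n+1, ω, ω', h => by
      have ih := entS_congr Z ℓ sw y z n ω ω' (fun i hi => h i (Nat.le_succ_of_le hi))
      have hz : Z (n+1) ω = Z (n+1) ω' := h (n+1) le_rfl
      simp only [entS, ih, hz]

end EntAux

theorem entangled_walks_exist
    {V : Type} (G : SimpleGraph V) (hconn : G.Connected)
    (Γ : Subgroup (Equiv.Perm V))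
    (hAut : ∀ π ∈ Γ, ∀ u v : V, G.Adj (π u) (π v) ↔ G.Adj u v)
    (hswap : ∀ x y : V, ∃ π ∈ Γ, π x = y ∧ π y = x)
    (p : V → V → ℝ≥0∞)
    (hp : ∀ π ∈ Γ, ∀ x y : V, p (π x) (π y) = p x y)
    {Ω : Type} [MeasurableSpace Ω] (P : Measure Ω) [IsProbabilityMeasure P]
    (y z : V)
    (Z : ℕ → Ω → V) (hZ0 : ∀ ω, Z 0 ω = y)
    -- Z is a random walk with kernel p
    (hZwalk : ∀ n (f : ℕ → V) (w : V),
      P {ω | (∀ i ≤ n, Z i ω = f i) ∧ Z (n + 1) ω = w}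
        = p (f n) w * P {ω | ∀ i ≤ n, Z i ω = f i})
    (ℓ : ℕ → Bool) :
    ∃ Wy Wz : ℕ → Ω → V,
      (∀ ω, Wy 0 ω = y) ∧ (∀ ω, Wz 0 ω = z) ∧
      (∀ n ω, G.dist (Wy n ω) (Wz n ω) = G.dist (Z n ω) z) ∧
      (∀ n (fy fz : ℕ → V) (w : V),
        (ℓ (n + 1) = true →
          (∀ ω, Wz (n + 1) ω = Wz n ω) ∧
          P {ω | (∀ i ≤ n, Wy i ω = fy i ∧ Wz i ω = fz i) ∧ Wy (n + 1) ω = w}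
            = p (fy n) w * P {ω | ∀ i ≤ n, Wy i ω = fy i ∧ Wz i ω = fz i}) ∧
        (ℓ (n + 1) = false →
          (∀ ω, Wy (n + 1) ω = Wy n ω) ∧
          P {ω | (∀ i ≤ n, Wy i ω = fy i ∧ Wz i ω = fz i) ∧ Wz (n + 1) ω = w}
            = p (fz n) w * P {ω | ∀ i ≤ n, Wy i ω = fy i ∧ Wz i ω = fz i})) := by
  classical
  choose sw hswΓ hsw using hswap
  -- automorphisms preserve graph distance
  have hdist_le : ∀ π ∈ Γ, ∀ a b : V, G.dist (π a) (π b) ≤ G.dist a b := by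
    intro π hπ a b
    obtain ⟨W, hW⟩ := hconn.exists_walk_length_eq_dist a b
    let f : G →g G := ⟨π, fun {u v} h => (hAut π hπ u v).2 h⟩
    have h := G.dist_le (W.map f)
    rw [SimpleGraph.Walk.length_map, hW] at h
    exact h
  have hdist : ∀ π ∈ Γ, ∀ a b : V, G.dist (π a) (π b) = G.dist a b := by
    intro π hπ a b
    refine le_antisymm (hdist_le π hπ a b) ?_
    have := hdist_le π⁻¹ (inv_mem hπ) (π a) (π b)
    simpa using this
  set S := entS Z ℓ sw y z with hS
  set Wy : ℕ → Ω → V := fun n ω => (S n ω).1.1 with hWy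
  set Wz : ℕ → Ω → V := fun n ω => (S n ω).1.2 with hWz
  -- the invariant
  have hinv : ∀ n ω, (S n ω).2 ∈ Γ ∧
      (S n ω).2 (Z n ω) = (if ℓ (n+1) = true then (S n ω).1.1 else (S n ω).1.2) ∧
      (S n ω).2 z = (if ℓ (n+1) = true then (S n ω).1.2 else (S n ω).1.1) := by
    intro n
    induction n with
    | zero =>
        intro ω
        by_cases h1 : ℓ 1 = true <;>
          simp [hS, entS, h1, hZ0 ω, hswΓ, (hsw y z).1, (hsw y z).2, Subgroup.one_mem]
    | succ n ih =>
        intro ω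
        obtain ⟨hΓ, hI2, hI3⟩ := ih ω
        rw [hS] at hΓ hI2 hI3
        by_cases h1 : ℓ (n+1) = true <;> by_cases h2 : ℓ (n+2) = true <;>
          simp only [h1, h2, if_true, if_false, eq_self_iff_true] at hI2 hI3 ⊢ <;>
          simp [hS, entS, h1, h2, hI2, hI3, hΓ, mul_mem, hswΓ,
            (hsw ((entS Z ℓ sw y z n ω).2 (Z (n+1) ω)) ((entS Z ℓ sw y z n ω).1.2)).1,
            (hsw ((entS Z ℓ sw y z n ω).2 (Z (n+1) ω)) ((entS Z ℓ sw y z n ω).1.2)).2,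
            (hsw ((entS Z ℓ sw y z n ω).1.1) ((entS Z ℓ sw y z n ω).2 (Z (n+1) ω))).1,
            (hsw ((entS Z ℓ sw y z n ω).1.1) ((entS Z ℓ sw y z n ω).2 (Z (n+1) ω))).2]
  refine ⟨Wy, Wz, ?_, ?_, ?_, ?_⟩
  · intro ω; simp [hWy, hS, entS]
  · intro ω; simp [hWz, hS, entS]
  · intro n ω
    obtain ⟨hΓ, hI2, hI3⟩ := hinv n ω
    by_cases h1 : ℓ (n+1) = true
    · rw [h1, if_pos rfl] at hI2 hI3
      calc G.dist (Wy n ω) (Wz n ω) = G.dist ((S n ω).2 (Z n ω)) ((S n ω).2 z) := by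
            rw [hI2, hI3]
        _ = G.dist (Z n ω) z := hdist _ hΓ _ _
    · rw [if_neg h1] at hI2 hI3
      calc G.dist (Wy n ω) (Wz n ω) = G.dist ((S n ω).2 z) ((S n ω).2 (Z n ω)) := by
            rw [hI2, hI3]
        _ = G.dist z (Z n ω) := hdist _ hΓ _ _
        _ = G.dist (Z n ω) z := G.dist_comm
  · intro n fy fz w
    set τ := entT ℓ sw y z fy fz with hτ
    have hτΓ : ∀ m, τ m ∈ Γ := by
      intro m
      induction m with
      | zero => by_cases h1 : ℓ 1 = true <;> simp [hτ, entT, h1, hswΓ, Subgroup.one_mem]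
      | succ m ih => by_cases h1 : ℓ (m+2) = ℓ (m+1) <;>
          simp [hτ, entT, h1, hτ ▸ ih, mul_mem, hswΓ]
    -- on the matching event, σ is the deterministic τ
    have hστ : ∀ ω, (∀ i ≤ n, Wy i ω = fy i ∧ Wz i ω = fz i) →
        ∀ i ≤ n, (S i ω).2 = τ i := by
      intro ω hω i
      induction i with
      | zero => intro _; simp [hS, entS, hτ, entT]
      | succ i ih =>
          intro hi
          have h1 := ih (Nat.le_of_succ_le hi)
          have hm := hω (i+1) hi
          rw [hS, entS_succ_snd, ← hS, h1]
          have hy1 : (S (i+1) ω).1.1 = fy (i+1) := hm.1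
          have hz1 : (S (i+1) ω).1.2 = fz (i+1) := hm.2
          rw [hy1, hz1, hτ]
          by_cases h2 : ℓ (i+2) = ℓ (i+1) <;> simp [entT, h2, ← hτ]
    -- on the matching event, the Z-trajectory is determined
    have hZdet : ∀ ω, (∀ i ≤ n, Wy i ω = fy i ∧ Wz i ω = fz i) →
        ∀ i ≤ n, Z i ω = (τ i)⁻¹ (if ℓ (i+1) = true then fy i else fz i) := by
      intro ω hω i hi
      obtain ⟨_, hI2, _⟩ := hinv i ω
      have := hστ ω hω i hi
      rw [this] at hI2
      have hm := hω i hi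
      have : τ i (Z i ω) = (if ℓ (i+1) = true then fy i else fz i) := by
        rw [hI2]
        by_cases h1 : ℓ (i+1) = true
        · rw [if_pos h1, if_pos h1]; exact hm.1
        · rw [if_neg h1, if_neg h1]; exact hm.2
      calc Z i ω = (τ i)⁻¹ (τ i (Z i ω)) := by simp
        _ = _ := by rw [this]
    set E := {ω | ∀ i ≤ n, Wy i ω = fy i ∧ Wz i ω = fz i} with hE
    by_cases hne : ∃ ω₀, ω₀ ∈ E
    · obtain ⟨ω₀, hω₀⟩ := hne
      have hEeq : E = {ω | ∀ i ≤ n, Z i ω = Z i ω₀} := by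
        ext ω
        constructor
        · intro hω i hi
          rw [hZdet ω hω i hi, hZdet ω₀ hω₀ i hi]
        · intro hω i hi
          have : S i ω = S i ω₀ :=
            entS_congr Z ℓ sw y z i ω ω₀ (fun j hj => hω j (le_trans hj hi))
          have h1 : Wy i ω = Wy i ω₀ := by rw [hWy]; simp only [this]
          have h2 : Wz i ω = Wz i ω₀ := by rw [hWz]; simp only [this]
          exact ⟨h1.trans (hω₀ i hi).1, h2.trans (hω₀ i hi).2⟩
      have hσn : ∀ ω ∈ E, (S n ω).2 = τ n := fun ω hω => hστ ω hω n le_rfl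
      have hEiff : ∀ ω, (∀ i ≤ n, Wy i ω = fy i ∧ Wz i ω = fz i) ↔
          (∀ i ≤ n, Z i ω = Z i ω₀) := fun ω => Set.ext_iff.mp hEeq ω
      constructor
      · -- ℓ (n+1) = true
        intro h1
        constructor
        · intro ω; simp [hWz, hS, entS, h1]
        · have hset : {ω | (∀ i ≤ n, Wy i ω = fy i ∧ Wz i ω = fz i) ∧ Wy (n+1) ω = w}
              = {ω | (∀ i ≤ n, Z i ω = Z i ω₀) ∧ Z (n+1) ω = (τ n)⁻¹ w} := by
            ext ω
            simp only [Set.mem_setOf_eq]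
            constructor
            · rintro ⟨hω, hw⟩
              refine ⟨(hEiff ω).mp hω, ?_⟩
              have hy1 : Wy (n+1) ω = (S n ω).2 (Z (n+1) ω) := by
                simp [hWy, hS, entS, h1]
              rw [hy1, hσn ω hω] at hw
              rw [← hw]; simp
            · rintro ⟨hω, hw⟩
              have hωE : ω ∈ E := (hEiff ω).mpr hω
              refine ⟨hωE, ?_⟩
              have hy1 : Wy (n+1) ω = (S n ω).2 (Z (n+1) ω) := by
                simp [hWy, hS, entS, h1]
              rw [hy1, hσn ω hωE, hw]; simp
          have hEeq' : E = {ω | ∀ i ≤ n, Z i ω = (fun i => Z i ω₀) i} := hEeq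
          rw [hset]
          have := hZwalk n (fun i => Z i ω₀) ((τ n)⁻¹ w)
          rw [this, ← hEeq']
          congr 1
          have hgn : Z n ω₀ = (τ n)⁻¹ (fy n) := by
            have := hZdet ω₀ hω₀ n le_rfl
            rw [this, h1, if_pos rfl]
          rw [hgn]
          exact hp ((τ n)⁻¹) (inv_mem (hτΓ n)) (fy n) w
      · -- ℓ (n+1) = false
        intro h1
        have h1' : ¬ (ℓ (n+1) = true) := by simp [h1]
        constructor
        · intro ω; simp [hWy, hS, entS, h1']
        · have hset : {ω | (∀ i ≤ n, Wy i ω = fy i ∧ Wz i ω = fz i) ∧ Wz (n+1) ω = w}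
              = {ω | (∀ i ≤ n, Z i ω = Z i ω₀) ∧ Z (n+1) ω = (τ n)⁻¹ w} := by
            ext ω
            simp only [Set.mem_setOf_eq]
            constructor
            · rintro ⟨hω, hw⟩
              refine ⟨(hEiff ω).mp hω, ?_⟩
              have hz1 : Wz (n+1) ω = (S n ω).2 (Z (n+1) ω) := by
                simp [hWz, hS, entS, h1']
              rw [hz1, hσn ω hω] at hw
              rw [← hw]; simp
            · rintro ⟨hω, hw⟩
              have hωE : ω ∈ E := (hEiff ω).mpr hω
              refine ⟨hωE, ?_⟩
              have hz1 : Wz (n+1) ω = (S n ω).2 (Z (n+1) ω) := by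
                simp [hWz, hS, entS, h1']
              rw [hz1, hσn ω hωE, hw]; simp
          have hEeq' : E = {ω | ∀ i ≤ n, Z i ω = (fun i => Z i ω₀) i} := hEeq
          rw [hset]
          have := hZwalk n (fun i => Z i ω₀) ((τ n)⁻¹ w)
          rw [this, ← hEeq']
          congr 1
          have hgn : Z n ω₀ = (τ n)⁻¹ (fz n) := by
            have := hZdet ω₀ hω₀ n le_rfl
            rw [this, h1]; simp
          rw [hgn]
          exact hp ((τ n)⁻¹) (inv_mem (hτΓ n)) (fz n) w
    · -- empty event
      push_neg at hne
      have hE0 : P E = 0 := by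
        have : E = ∅ := Set.eq_empty_iff_forall_notMem.2 hne
        rw [this, measure_empty]
      have hle : ∀ (A : Set Ω), A ⊆ E → P A = 0 :=
        fun A hA => measure_mono_null hA hE0
      constructor
      · intro h1
        refine ⟨fun ω => by simp [hWz, hS, entS, h1], ?_⟩
        rw [hle _ (fun ω hω => hω.1), hE0, mul_zero]
      · intro h1
        have h1' : ¬ (ℓ (n+1) = true) := by simp [h1]
        refine ⟨fun ω => by simp [hWy, hS, entS, h1'], ?_⟩
        rw [hle _ (fun ω hω => hω.1), hE0, mul_zero]
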